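/- Let X₁,…,Xₙ be independent random variables and f satisfy the bounded differences property with constants c₁,…,cₙ (changing the i-th coordinate changes f by at most cᵢ). Then Pr[|f(X) − E f(X)| ≥ ε] ≤ 2·exp(−2ε²/∑ᵢcᵢ²). -/

import Mathlib

open MeasureTheory
open Real

section McDiarmidAux
lemma mcd_D_pos (p : ℝ) (hp0 : 0 ≤ p) (hp1 : p ≤ 1) (h : ℝ) :
    0 < 1 - p + p * exp h := by
  rcases eq_or_lt_of_le hp0 with hp | hp
  · simp [← hp]
  · nlinarith [exp_pos h]

lemma mcd_analytic (p : ℝ) (hp0 : 0 ≤ p) (hp1 : p ≤ 1) (h : ℝ) :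
    (1 - p) * exp (-p * h) + p * exp ((1 - p) * h) ≤ exp (h ^ 2 / 8) := by
  set D : ℝ → ℝ := fun x => 1 - p + p * exp x with hD
  have hDpos : ∀ x, 0 < D x := fun x => mcd_D_pos p hp0 hp1 x
  set φ : ℝ → ℝ := fun x => x ^ 2 / 8 + p * x - Real.log (D x) with hφ
  set d : ℝ → ℝ := fun x => x / 4 + p - p * exp x / D x with hd
  have hDder : ∀ x, HasDerivAt D (p * exp x) x := by
    intro x
    exact ((Real.hasDerivAt_exp x).const_mul p).const_add (1 - p)
  have hφder : ∀ x, HasDerivAt φ (d x) x := by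
    intro x
    have h1 : HasDerivAt (fun y : ℝ => y ^ 2 / 8 + p * y) (x / 4 + p) x := by
      have := ((hasDerivAt_pow 2 x).div_const 8).add ((hasDerivAt_id x).const_mul p)
      refine this.congr_deriv ?_
      simp; ring
    have h2 : HasDerivAt (fun y => Real.log (D y)) (p * exp x / D x) x :=
      (hDder x).log (hDpos x).ne'
    exact h1.sub h2
  have hdder : ∀ x, HasDerivAt d (1/4 - p * (1 - p) * exp x / (D x) ^ 2) x := by
    intro x
    have h1 : HasDerivAt (fun y : ℝ => y / 4 + p) (1/4) x := by
      simpa using ((hasDerivAt_id x).div_const 4).add_const p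
    have h2 : HasDerivAt (fun y => p * exp y / D y)
        ((p * exp x * D x - p * exp x * (p * exp x)) / (D x) ^ 2) x :=
      ((Real.hasDerivAt_exp x).const_mul p).div (hDder x) (hDpos x).ne'
    have := h1.sub h2
    refine this.congr_deriv ?_
    have : (p * exp x * D x - p * exp x * (p * exp x)) = p * (1 - p) * exp x := by
      simp only [hD]; ring
    rw [this]
  have hdnn : ∀ x, 0 ≤ 1/4 - p * (1 - p) * exp x / (D x) ^ 2 := by
    intro x
    have hD2 : 0 < (D x) ^ 2 := pow_pos (hDpos x) 2
    rw [sub_nonneg, div_le_iff₀ hD2]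
    have := sq_nonneg ((1 - p) - p * exp x)
    simp only [hD]
    nlinarith [exp_pos x]
  have hdmono : Monotone d :=
    monotone_of_deriv_nonneg (fun x => (hdder x).differentiableAt)
      (fun x => by rw [(hdder x).deriv]; exact hdnn x)
  have hd0 : d 0 = 0 := by
    simp only [hd, hD]
    rw [Real.exp_zero]
    have : (1 : ℝ) - p + p * 1 = 1 := by ring
    rw [this]
    ring
  have hφdiff : Differentiable ℝ φ := fun x => (hφder x).differentiableAt
  have hφ0 : φ 0 = 0 := by
    simp only [hφ, hD]
    rw [Real.exp_zero]
    norm_num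
  have key : 0 ≤ φ h := by
    rcases le_or_gt 0 h with hh | hh
    · have hmono : MonotoneOn φ (Set.Ici (0 : ℝ)) := by
        apply monotoneOn_of_deriv_nonneg (convex_Ici 0) hφdiff.continuous.continuousOn
          (hφdiff.differentiableOn)
        intro x hx
        rw [(hφder x).deriv]
        rw [interior_Ici] at hx
        have : d 0 ≤ d x := hdmono (le_of_lt hx)
        linarith [hd0 ▸ this]
      have := hmono (Set.self_mem_Ici) hh hh
      linarith [hφ0 ▸ this]
    · have hanti : AntitoneOn φ (Set.Iic (0 : ℝ)) := by
        apply antitoneOn_of_deriv_nonpos (convex_Iic 0) hφdiff.continuous.continuousOn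
          (hφdiff.differentiableOn)
        intro x hx
        rw [(hφder x).deriv]
        rw [interior_Iic] at hx
        have : d x ≤ d 0 := hdmono (le_of_lt hx)
        linarith [hd0 ▸ this]
      have := hanti (le_of_lt hh : h ≤ 0) (Set.self_mem_Iic) (le_of_lt hh)
      linarith [hφ0 ▸ this]
  -- from φ h ≥ 0 : log (D h) ≤ h^2/8 + p h
  have hlog : Real.log (D h) ≤ h ^ 2 / 8 + p * h := by
    simp only [hφ] at key; linarith
  have hDle : D h ≤ exp (h ^ 2 / 8 + p * h) := by
    rw [← Real.exp_log (hDpos h)]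
    exact Real.exp_le_exp.mpr hlog
  have : exp (-p * h) * D h ≤ exp (-p * h) * exp (h ^ 2 / 8 + p * h) :=
    mul_le_mul_of_nonneg_left hDle (exp_nonneg _)
  rw [← Real.exp_add] at this
  have heq : -p * h + (h ^ 2 / 8 + p * h) = h ^ 2 / 8 := by ring
  rw [heq] at this
  calc (1 - p) * exp (-p * h) + p * exp ((1 - p) * h)
      = exp (-p * h) * D h := by
        simp only [hD]
        rw [show (1 - p) * h = h + (-p * h) by ring, Real.exp_add]
        ring
    _ ≤ exp (h ^ 2 / 8) := this

/-- Hoeffding's lemma. -/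
lemma mcd_hoeffding {Ω : Type*} [MeasurableSpace Ω] (ν : Measure Ω)
    [IsProbabilityMeasure ν] (g : Ω → ℝ) (hg : Measurable g) (c t : ℝ)
    (hosc : ∀ ω ω', g ω - g ω' ≤ c) (hmean : ∫ ω, g ω ∂ν = 0) :
    ∫ ω, exp (t * g ω) ∂ν ≤ exp (t ^ 2 * c ^ 2 / 8) := by
  have hne : Nonempty Ω := by
    by_contra hne
    simp only [not_nonempty_iff] at hne
    have : ν Set.univ = 0 := by simp [Set.univ_eq_empty_iff.mpr hne]
    simp [measure_univ] at this
  obtain ⟨ω₀⟩ := hne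
  have hc0 : 0 ≤ c := le_trans (by simp) (hosc ω₀ ω₀)
  -- g is bounded
  have hgb : ∀ ω, |g ω| ≤ |g ω₀| + c := by
    intro ω
    have h1 := hosc ω ω₀
    have h2 := hosc ω₀ ω
    rw [abs_le]; constructor <;> [skip; skip] <;> cases' abs_le.mp (le_refl |g ω₀|) with l r <;>
      [linarith [neg_abs_le (g ω₀)]; linarith [le_abs_self (g ω₀)]]
  set m := sInf (Set.range g) with hm
  set M := sSup (Set.range g) with hM
  have hbddB : BddAbove (Set.range g) := ⟨|g ω₀| + c, by rintro _ ⟨ω, rfl⟩; linarith [(abs_le.mp (hgb ω)).2]⟩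
  have hbddb : BddBelow (Set.range g) := ⟨-(|g ω₀| + c), by rintro _ ⟨ω, rfl⟩; linarith [(abs_le.mp (hgb ω)).1]⟩
  have hrne : (Set.range g).Nonempty := ⟨g ω₀, ⟨ω₀, rfl⟩⟩
  have hle : ∀ ω, m ≤ g ω := fun ω => csInf_le hbddb ⟨ω, rfl⟩
  have hge : ∀ ω, g ω ≤ M := fun ω => le_csSup hbddB ⟨ω, rfl⟩
  have hmM : m ≤ M := le_trans (hle ω₀) (hge ω₀)
  have hMmc : M - m ≤ c := by
    have : M ≤ m + c := by
      apply csSup_le hrne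
      rintro _ ⟨ω, rfl⟩
      have : ∀ ω', g ω - c ≤ g ω' := fun ω' => by linarith [hosc ω ω']
      have := le_csInf hrne (by rintro _ ⟨ω', rfl⟩; exact this ω')
      linarith
    linarith
  have hgint : Integrable g ν := by
    apply Integrable.mono' (integrable_const (|g ω₀| + c)) hg.aestronglyMeasurable
    exact ae_of_all _ fun ω => by simpa using hgb ω
  have hm0 : m ≤ 0 := by
    have : m = ∫ _, m ∂ν := by simp
    calc m = ∫ _, m ∂ν := this
      _ ≤ ∫ ω, g ω ∂ν := integral_mono (integrable_const m) hgint hle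
      _ = 0 := hmean
  have hM0 : 0 ≤ M := by
    calc (0:ℝ) = ∫ ω, g ω ∂ν := hmean.symm
      _ ≤ ∫ _, M ∂ν := integral_mono hgint (integrable_const M) hge
      _ = M := by simp
  rcases eq_or_lt_of_le hmM with heq | hlt
  · -- m = M : g is constant = 0
    have hg0 : ∀ ω, g ω = 0 := by
      intro ω
      have := hle ω; have := hge ω
      have : g ω = m := le_antisymm (heq ▸ hge ω) (hle ω)
      linarith [hm0, hM0, heq ▸ hm0]
    simp only [hg0, mul_zero, Real.exp_zero, integral_const, measure_univ, ENNReal.toReal_one, probReal_univ,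
      smul_eq_mul, mul_one]
    exact Real.one_le_exp (by positivity)
  · -- main case: m < M
    set p := -m / (M - m) with hp
    have hMm : 0 < M - m := by linarith
    have hp0 : 0 ≤ p := div_nonneg (by linarith) hMm.le
    have hp1 : p ≤ 1 := by rw [div_le_one hMm]; linarith
    set h := t * (M - m) with hh
    -- pointwise bound via convexity of exp
    have hpt : ∀ ω, exp (t * g ω) ≤
        (M - g ω) / (M - m) * exp (t * m) + (g ω - m) / (M - m) * exp (t * M) := by
      intro ω
      have hl1 : 0 ≤ (M - g ω) / (M - m) := div_nonneg (by linarith [hge ω]) hMm.le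
      have hl2 : 0 ≤ (g ω - m) / (M - m) := div_nonneg (by linarith [hle ω]) hMm.le
      have hsum : (M - g ω) / (M - m) + (g ω - m) / (M - m) = 1 := by
        field_simp; ring
      have := convexOn_exp.2 (Set.mem_univ (t * m)) (Set.mem_univ (t * M)) hl1 hl2 hsum
      simp only [smul_eq_mul] at this
      have harg : (M - g ω) / (M - m) * (t * m) + (g ω - m) / (M - m) * (t * M) = t * g ω := by
        field_simp; ring
      rwa [harg] at this
    have hint_exp : Integrable (fun ω => exp (t * g ω)) ν := by
      apply Integrable.mono' (integrable_const (exp (|t| * (|g ω₀| + c))))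
        (((hg.const_mul t).exp).aestronglyMeasurable)
      refine ae_of_all _ fun ω => ?_
      rw [Real.norm_eq_abs, abs_of_pos (exp_pos _)]
      apply Real.exp_le_exp.mpr
      calc t * g ω ≤ |t * g ω| := le_abs_self _
        _ = |t| * |g ω| := abs_mul _ _
        _ ≤ |t| * (|g ω₀| + c) := by
            exact mul_le_mul_of_nonneg_left (hgb ω) (abs_nonneg t)
    have hint1 : Integrable (fun ω => (M - g ω) / (M - m) * exp (t * m)) ν :=
      (((integrable_const M).sub hgint).div_const (M - m)).mul_const _
    have hint2 : Integrable (fun ω => (g ω - m) / (M - m) * exp (t * M)) ν :=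
      ((hgint.sub (integrable_const m)).div_const (M - m)).mul_const _
    have hint_rhs : Integrable
        (fun ω => (M - g ω) / (M - m) * exp (t * m) + (g ω - m) / (M - m) * exp (t * M)) ν :=
      hint1.add hint2
    have step1 : ∫ ω, exp (t * g ω) ∂ν ≤
        M / (M - m) * exp (t * m) + (-m) / (M - m) * exp (t * M) := by
      calc ∫ ω, exp (t * g ω) ∂ν
          ≤ ∫ ω, ((M - g ω) / (M - m) * exp (t * m) + (g ω - m) / (M - m) * exp (t * M)) ∂ν :=
            integral_mono hint_exp hint_rhs hpt
        _ = M / (M - m) * exp (t * m) + (-m) / (M - m) * exp (t * M) := by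
            rw [integral_add hint1 hint2, integral_mul_const, integral_mul_const]
            congr 1
            · congr 1
              rw [integral_div, integral_sub (integrable_const M) hgint, hmean]
              simp
            · congr 1
              rw [integral_div, integral_sub hgint (integrable_const m), hmean]
              simp
    -- rewrite in terms of p and h
    have hrw : M / (M - m) * exp (t * m) + (-m) / (M - m) * exp (t * M)
        = (1 - p) * exp (-p * h) + p * exp ((1 - p) * h) := by
      have h1p : 1 - p = M / (M - m) := by rw [hp]; field_simp; ring
      have harg1 : t * m = -p * h := by rw [hp, hh]; field_simp
      have harg2 : t * M = (1 - p) * h := by rw [h1p, hh]; field_simp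
      rw [← harg1, ← harg2, h1p, hp]
    have step2 := mcd_analytic p hp0 hp1 h
    have hfin : exp (h ^ 2 / 8) ≤ exp (t ^ 2 * c ^ 2 / 8) := by
      apply Real.exp_le_exp.mpr
      rw [hh]
      have : (t * (M - m)) ^ 2 = t ^ 2 * (M - m) ^ 2 := by ring
      rw [this]
      have h2 : (M - m) ^ 2 ≤ c ^ 2 := by nlinarith
      nlinarith [sq_nonneg t]
    linarith [step1, hrw ▸ step2]

lemma mcd_int {Ω : Type*} [MeasurableSpace Ω] (ν : Measure Ω) [IsFiniteMeasure ν]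
    (g : Ω → ℝ) (hg : AEStronglyMeasurable g ν) (C : ℝ) (hb : ∀ ω, |g ω| ≤ C) :
    Integrable g ν :=
  Integrable.mono' (integrable_const C) hg (ae_of_all _ fun ω => by simpa using hb ω)

/-- Telescoping: bounded differences in each coordinate implies a global bound. -/
lemma mcd_telescope {X : Type*} {n : ℕ} (f : (Fin n → X) → ℝ) (c : Fin n → ℝ)
    (hbd : ∀ (i : Fin n) (x x' : Fin n → X),
      (∀ j, j ≠ i → x j = x' j) → |f x - f x'| ≤ c i) :
    ∀ x x', |f x - f x'| ≤ ∑ i, c i := by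
  suffices h : ∀ s : Finset (Fin n), ∀ x x', (∀ j ∉ s, x j = x' j) →
      |f x - f x'| ≤ ∑ i ∈ s, c i by
    intro x x'
    exact h Finset.univ x x' (fun j hj => absurd (Finset.mem_univ j) hj)
  intro s
  classical
  induction s using Finset.induction_on with
  | empty =>
    intro x x' hx
    have : x = x' := funext fun j => hx j (Finset.notMem_empty j)
    simp [this]
  | insert a s ha ih =>
    intro x x' hx
    set x'' := Function.update x a (x' a) with hx''
    have h1 : |f x - f x''| ≤ c a := by
      apply hbd a
      intro j hj
      rw [hx'', Function.update_of_ne hj]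
    have h2 : |f x'' - f x'| ≤ ∑ i ∈ s, c i := by
      apply ih
      intro j hj
      by_cases hja : j = a
      · subst hja; simp [hx'']
      · rw [hx'', Function.update_of_ne hja]
        exact hx j (by simp [hja, hj])
    calc |f x - f x'| ≤ |f x - f x''| + |f x'' - f x'| := abs_sub_le _ _ _
      _ ≤ c a + ∑ i ∈ s, c i := add_le_add h1 h2
      _ = ∑ i ∈ insert a s, c i := (Finset.sum_insert ha).symm

/-- The MGF bound at the heart of McDiarmid's inequality. -/
lemma mcd_mgf {X : Type*} [MeasurableSpace X] :
    ∀ (n : ℕ) (μ : Fin n → Measure X), (∀ i, IsProbabilityMeasure (μ i)) →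
    ∀ (f : (Fin n → X) → ℝ), Measurable f →
    ∀ (c : Fin n → ℝ),
      (∀ (i : Fin n) (x x' : Fin n → X), (∀ j, j ≠ i → x j = x' j) → |f x - f x'| ≤ c i) →
    ∀ t : ℝ,
      ∫ x, exp (t * (f x - ∫ y, f y ∂(Measure.pi μ))) ∂(Measure.pi μ)
        ≤ exp (t ^ 2 * (∑ i, (c i) ^ 2) / 8) := by
  intro n
  induction n with
  | zero =>
    intro μ hprob f hf c hbd t
    haveI := hprob
    haveI : IsProbabilityMeasure (Measure.pi μ) := by infer_instance
    have hconst : ∀ x : Fin 0 → X, f x = f default := fun x => congrArg f (Subsingleton.elim _ _)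
    have hint : ∫ y, f y ∂(Measure.pi μ) = f default := by
      rw [show (fun y => f y) = fun _ => f default from funext hconst]
      simp
    have : (fun x : Fin 0 → X => exp (t * (f x - ∫ y, f y ∂(Measure.pi μ))))
        = fun _ => (1 : ℝ) := by
      funext x
      rw [hint, hconst x]
      simp
    rw [this]
    simp
  | succ n ih =>
    intro μ hprob f hf c hbd t
    haveI := hprob
    haveI : IsProbabilityMeasure (Measure.pi μ) := by infer_instance
    -- notation
    set pm := Measure.pi μ with hpm
    set μ₀ := μ 0 with hμ₀
    set μ' : Fin n → Measure X := fun j => μ ((0 : Fin (n+1)).succAbove j) with hμ'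
    haveI : ∀ j, IsProbabilityMeasure (μ' j) := fun j => hprob _
    set pm' := Measure.pi μ' with hpm'
    haveI : IsProbabilityMeasure pm' := by infer_instance
    set e := MeasurableEquiv.piFinSuccAbove (fun _ : Fin (n+1) => X) 0 with he
    have mp : MeasurePreserving e pm (μ₀.prod pm') :=
      measurePreserving_piFinSuccAbove μ 0
    haveI : IsProbabilityMeasure (μ₀.prod pm') := by infer_instance
    set ins : X → (Fin n → X) → (Fin (n+1) → X) := fun x₀ y => Fin.insertNth 0 x₀ y with hins
    have hesymm : ∀ x₀ y, e.symm (x₀, y) = ins x₀ y := fun x₀ y => rfl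
    have hins0 : ∀ x₀ y, ins x₀ y 0 = x₀ := fun x₀ y => by simp [hins]
    have hinss : ∀ x₀ y j, ins x₀ y ((0 : Fin (n+1)).succAbove j) = y j :=
      fun x₀ y j => by simp [hins]
    -- global bound on f
    haveI hXne : Nonempty X := by
      by_contra hne
      simp only [not_nonempty_iff] at hne
      have : μ₀ Set.univ = 0 := by simp [Set.univ_eq_empty_iff.mpr hne]
      simp [measure_univ] at this
    have hc0 : ∀ i, 0 ≤ c i := fun i =>
      le_trans (by simp) (hbd i (fun _ => Classical.arbitrary X) _ (fun _ _ => rfl))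
    set B := ∑ i, c i with hB
    have hglob : ∀ x x', |f x - f x'| ≤ B := mcd_telescope f c hbd
    set x₁ : Fin (n+1) → X := fun _ => Classical.arbitrary X with hx₁
    set bnd := |f x₁| + B with hbnd
    have hfbd : ∀ x, |f x| ≤ bnd := by
      intro x
      have := hglob x x₁
      have h1 := abs_sub_abs_le_abs_sub (f x) (f x₁)
      rw [hbnd]; linarith
    have hfint : Integrable f pm := mcd_int pm f hf.aestronglyMeasurable bnd hfbd
    set Ef := ∫ y, f y ∂pm with hEf
    have hEfbd : |Ef| ≤ bnd := by
      rw [hEf]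
      have := norm_integral_le_of_norm_le_const (μ := pm) (f := f) (C := bnd)
        (ae_of_all _ fun x => by simpa using hfbd x)
      simpa [measure_univ] using this
    have hfEf : ∀ x, |f x - Ef| ≤ B := by
      intro x
      have hsub : f x - Ef = ∫ y, (f x - f y) ∂pm := by
        rw [integral_sub (integrable_const (f x)) hfint, integral_const]
        simp [measure_univ, hEf]
      rw [hsub]
      have := norm_integral_le_of_norm_le_const (μ := pm) (f := fun y => f x - f y) (C := B)
        (ae_of_all _ fun y => by simpa using hglob x y)
      simpa [measure_univ] using this
    -- insertion helpers
    have hins_succ : ∀ x₀ y j, ins x₀ y (Fin.succ j) = y j := fun x₀ y j => by simp [hins]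
    have hinsmeas : ∀ y, Measurable fun x₀ => f (ins x₀ y) := fun y =>
      (hf.comp e.symm.measurable).comp (measurable_id.prodMk measurable_const)
    -- F : conditional expectation given the last n coordinates
    set F : (Fin n → X) → ℝ := fun y => ∫ x₀, f (e.symm (x₀, y)) ∂μ₀ with hF
    have hFmeas : Measurable F :=
      ((hf.comp e.symm.measurable).stronglyMeasurable.integral_prod_left').measurable
    have hFbd : ∀ y, |F y| ≤ bnd := by
      intro y
      have := norm_integral_le_of_norm_le_const (μ := μ₀) (f := fun x₀ => f (e.symm (x₀, y)))
        (C := bnd) (ae_of_all _ fun x₀ => by simpa using hfbd _)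
      simpa [measure_univ] using this
    -- bounded differences for fixed y, varying coordinate 0
    have hdiff0 : ∀ y x₀ x₀', |f (ins x₀ y) - f (ins x₀' y)| ≤ c 0 := by
      intro y x₀ x₀'
      apply hbd 0
      intro k hk
      cases k using Fin.cases with
      | zero => exact absurd rfl hk
      | succ l => rw [hins_succ, hins_succ]
    -- bounded differences of F
    have hFbdiff : ∀ (j : Fin n) (y y' : Fin n → X), (∀ k, k ≠ j → y k = y' k) →
        |F y - F y'| ≤ c ((0 : Fin (n+1)).succAbove j) := by
      intro j y y' hyy
      have hptw : ∀ x₀, |f (ins x₀ y) - f (ins x₀ y')| ≤ c ((0 : Fin (n+1)).succAbove j) := by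
        intro x₀
        apply hbd
        intro k hk
        cases k using Fin.cases with
        | zero => rw [hins0, hins0]
        | succ l =>
          rw [hins_succ, hins_succ]
          apply hyy
          intro hlj
          apply hk
          rw [hlj, ← congr_fun Fin.succAbove_zero j]
      have i1 : Integrable (fun x₀ => f (ins x₀ y)) μ₀ :=
        mcd_int μ₀ _ (hinsmeas y).aestronglyMeasurable bnd (fun x₀ => hfbd _)
      have i2 : Integrable (fun x₀ => f (ins x₀ y')) μ₀ :=
        mcd_int μ₀ _ (hinsmeas y').aestronglyMeasurable bnd (fun x₀ => hfbd _)
      have hsub : F y - F y' = ∫ x₀, (f (ins x₀ y) - f (ins x₀ y')) ∂μ₀ := by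
        rw [integral_sub i1 i2]
        rfl
      rw [hsub]
      have := norm_integral_le_of_norm_le_const (μ := μ₀)
        (f := fun x₀ => f (ins x₀ y) - f (ins x₀ y')) (C := c ((0 : Fin (n+1)).succAbove j))
        (ae_of_all _ fun x₀ => by simpa using hptw x₀)
      simpa [measure_univ] using this
    -- inner Hoeffding bound
    set K := exp (t ^ 2 * (c 0) ^ 2 / 8) with hK
    have hinner : ∀ y, ∫ x₀, exp (t * (f (ins x₀ y) - F y)) ∂μ₀ ≤ K := by
      intro y
      apply mcd_hoeffding μ₀ _ ((hinsmeas y).sub_const (F y)) (c 0) t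
      · intro a b
        have h1 := hdiff0 y a b
        have h2 := le_abs_self (f (ins a y) - f (ins b y))
        linarith
      · rw [integral_sub (mcd_int μ₀ _ (hinsmeas y).aestronglyMeasurable bnd (fun x₀ => hfbd _))
          (integrable_const (F y)), integral_const]
        simp only [measure_univ, ENNReal.toReal_one, probReal_univ, smul_eq_mul, one_mul]
        exact sub_eq_zero.mpr rfl
    -- main chain
    set G : (Fin (n+1) → X) → ℝ := fun x => exp (t * (f x - Ef)) with hG
    have hGm : Measurable G := ((hf.sub_const Ef).const_mul t).exp
    have hGbd : ∀ x, |G x| ≤ exp (|t| * B) := by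
      intro x
      rw [hG, abs_of_pos (exp_pos _)]
      apply Real.exp_le_exp.mpr
      calc t * (f x - Ef) ≤ |t * (f x - Ef)| := le_abs_self _
        _ = |t| * |f x - Ef| := abs_mul _ _
        _ ≤ |t| * B := mul_le_mul_of_nonneg_left (hfEf x) (abs_nonneg t)
    have hGint : Integrable (fun z => G (e.symm z)) (μ₀.prod pm') :=
      mcd_int _ _ (hGm.comp e.symm.measurable).aestronglyMeasurable _ (fun z => hGbd _)
    have stepA : ∫ x, G x ∂pm = ∫ z, G (e.symm z) ∂(μ₀.prod pm') :=
      ((mp.symm e).integral_comp e.symm.measurableEmbedding G).symm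
    have stepB : ∫ z, G (e.symm z) ∂(μ₀.prod pm')
        = ∫ y, ∫ x₀, G (e.symm (x₀, y)) ∂μ₀ ∂pm' := by
      rw [integral_prod _ hGint]
      exact integral_integral_swap hGint
    set φ₁ : (Fin n → X) → ℝ := fun y => ∫ x₀, G (e.symm (x₀, y)) ∂μ₀ with hφ₁
    set φ₂ : (Fin n → X) → ℝ := fun y => exp (t * (F y - Ef)) * K with hφ₂
    have hφ₁eq : ∀ y, φ₁ y = exp (t * (F y - Ef)) * ∫ x₀, exp (t * (f (ins x₀ y) - F y)) ∂μ₀ := by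
      intro y
      rw [hφ₁]
      simp only
      rw [← integral_const_mul]
      congr 1
      funext x₀
      rw [hG]
      simp only [← Real.exp_add]
      congr 1
      have : e.symm (x₀, y) = ins x₀ y := hesymm x₀ y
      rw [this]
      ring
    have hφ₁meas : Measurable φ₁ :=
      ((hGm.comp e.symm.measurable).stronglyMeasurable.integral_prod_left').measurable
    have hφ₁bd : ∀ y, |φ₁ y| ≤ exp (|t| * B) := by
      intro y
      have := norm_integral_le_of_norm_le_const (μ := μ₀) (f := fun x₀ => G (e.symm (x₀, y)))
        (C := exp (|t| * B)) (ae_of_all _ fun x₀ => by simpa using hGbd _)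
      simpa [measure_univ] using this
    have hexpFbd : ∀ y, |exp (t * (F y - Ef))| ≤ exp (|t| * (2 * bnd)) := by
      intro y
      rw [abs_of_pos (exp_pos _)]
      apply Real.exp_le_exp.mpr
      calc t * (F y - Ef) ≤ |t| * |F y - Ef| := by
            rw [← abs_mul]; exact le_abs_self _
        _ ≤ |t| * (2 * bnd) := by
            apply mul_le_mul_of_nonneg_left _ (abs_nonneg t)
            calc |F y - Ef| ≤ |F y| + |Ef| := abs_sub _ _
              _ ≤ 2 * bnd := by linarith [hFbd y, hEfbd]
    have hφ₂int : Integrable φ₂ pm' := by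
      apply mcd_int pm' φ₂ (((hFmeas.sub_const Ef).const_mul t).exp.mul_const K).aestronglyMeasurable
        (exp (|t| * (2 * bnd)) * K)
      intro y
      have hKpos : (0:ℝ) < K := by rw [hK]; exact exp_pos _
      rw [hφ₂, abs_mul, abs_of_pos hKpos]
      exact mul_le_mul_of_nonneg_right (hexpFbd y) hKpos.le
    have stepD : ∫ y, φ₁ y ∂pm' ≤ ∫ y, φ₂ y ∂pm' := by
      apply integral_mono (mcd_int pm' φ₁ hφ₁meas.aestronglyMeasurable _ hφ₁bd) hφ₂int
      intro y
      rw [hφ₁eq y, hφ₂]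
      exact mul_le_mul_of_nonneg_left (hinner y) (exp_nonneg _)
    have hFmean : ∫ y, F y ∂pm' = Ef := by
      have hfint' : Integrable (fun z => f (e.symm z)) (μ₀.prod pm') :=
        mcd_int _ _ (hf.comp e.symm.measurable).aestronglyMeasurable bnd (fun z => hfbd _)
      rw [hEf]
      calc ∫ y, F y ∂pm' = ∫ y, ∫ x₀, f (e.symm (x₀, y)) ∂μ₀ ∂pm' := rfl
        _ = ∫ x₀, ∫ y, f (e.symm (x₀, y)) ∂pm' ∂μ₀ := (integral_integral_swap hfint').symm
        _ = ∫ z, f (e.symm z) ∂(μ₀.prod pm') := (integral_prod _ hfint').symm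
        _ = ∫ x, f x ∂pm := (mp.symm e).integral_comp e.symm.measurableEmbedding f
    have stepE : ∫ y, φ₂ y ∂pm' ≤ K * exp (t ^ 2 * (∑ j, (c ((0 : Fin (n+1)).succAbove j)) ^ 2) / 8) := by
      rw [hφ₂]
      simp only
      rw [integral_mul_const]
      rw [mul_comm]
      apply mul_le_mul_of_nonneg_left _ (by positivity : (0:ℝ) ≤ K)
      have := ih μ' (fun j => hprob _) F hFmeas (fun j => c ((0 : Fin (n+1)).succAbove j))
        hFbdiff t
      rw [hFmean] at this
      exact this
    have hsum : (∑ i : Fin (n+1), (c i) ^ 2)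
        = (c 0) ^ 2 + ∑ j : Fin n, (c ((0 : Fin (n+1)).succAbove j)) ^ 2 :=
      Fin.sum_univ_succAbove (fun i => (c i) ^ 2) 0
    calc ∫ x, exp (t * (f x - Ef)) ∂pm = ∫ y, φ₁ y ∂pm' := by rw [← hG, stepA, stepB]
      _ ≤ ∫ y, φ₂ y ∂pm' := stepD
      _ ≤ K * exp (t ^ 2 * (∑ j, (c ((0 : Fin (n+1)).succAbove j)) ^ 2) / 8) := stepE
      _ = exp (t ^ 2 * (∑ i : Fin (n+1), (c i) ^ 2) / 8) := by
          rw [hK, ← Real.exp_add, hsum]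
          congr 1
          ring

end McDiarmidAux

/-- McDiarmid's inequality: if `f` has the bounded differences property with
constants `c i` and the coordinates `X i` are independent, then
`Pr[|f(X) − E f(X)| ≥ ε] ≤ 2·exp(−2ε²/∑ cᵢ²)`. -/
theorem mcdiarmid_inequality {X : Type*} [MeasurableSpace X] (n : ℕ)
    (μ : Fin n → Measure X) [∀ i, IsProbabilityMeasure (μ i)]
    (f : (Fin n → X) → ℝ) (hf : Measurable f) (c : Fin n → ℝ)
    (hbd : ∀ (i : Fin n) (x x' : Fin n → X),
      (∀ j, j ≠ i → x j = x' j) → |f x - f x'| ≤ c i)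
    (ε : ℝ) (hε : 0 < ε) :
    (Measure.pi μ) {x | ε ≤ |f x - ∫ y, f y ∂(Measure.pi μ)|} ≤
      ENNReal.ofReal (2 * Real.exp (-2 * ε ^ 2 / ∑ i, (c i) ^ 2)) := by
  haveI : IsProbabilityMeasure (Measure.pi μ) := by infer_instance
  set pm := Measure.pi μ with hpm
  set Ef := ∫ y, f y ∂pm with hEf
  set S := ∑ i, (c i) ^ 2 with hS
  have hSnn : (0:ℝ) ≤ S := Finset.sum_nonneg fun i _ => sq_nonneg _
  rcases eq_or_lt_of_le hSnn with hS0 | hSpos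
  · -- degenerate case: all c i = 0, f is constant
    have hci : ∀ i ∈ Finset.univ, (c i) ^ 2 = 0 :=
      (Finset.sum_eq_zero_iff_of_nonneg (fun i _ => sq_nonneg (c i))).mp hS0.symm
    have hsumc : ∑ i, c i = 0 :=
      Finset.sum_eq_zero fun i hi => by
        have := hci i hi
        exact pow_eq_zero_iff two_ne_zero |>.mp this
    have hglob := mcd_telescope f c hbd
    rw [hsumc] at hglob
    have hempty : {x | ε ≤ |f x - Ef|} = ∅ := by
      ext x
      simp only [Set.mem_setOf_eq, Set.mem_empty_iff_false, iff_false, not_le]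
      have hfx : Ef = f x := by
        rw [hEf]
        have : (fun y => f y) = fun _ => f x := by
          funext y
          have h1 := hglob y x
          have h2 := abs_nonneg (f y - f x)
          have : |f y - f x| = 0 := le_antisymm h1 h2
          have := abs_eq_zero.mp this
          linarith
        rw [this]
        simp
      rw [← hfx]
      simpa using hε
    rw [hempty, measure_empty]
    exact bot_le
  · -- main case
    set t := 4 * ε / S with ht
    have htpos : 0 < t := by positivity
    set B := ∑ i, c i with hB
    have hglob := mcd_telescope f c hbd
    -- boundedness of f - Ef
    haveI hXne : Nonempty (Fin n → X) := by
      by_contra hne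
      simp only [not_nonempty_iff] at hne
      have : pm Set.univ = 0 := by simp [Set.univ_eq_empty_iff.mpr hne]
      simp [measure_univ] at this
    obtain ⟨x₁⟩ := hXne
    have hfbd : ∀ x, |f x| ≤ |f x₁| + B := by
      intro x
      have := hglob x x₁
      have h1 := abs_sub_abs_le_abs_sub (f x) (f x₁)
      linarith
    have hfint : Integrable f pm := mcd_int pm f hf.aestronglyMeasurable _ hfbd
    have hfEf : ∀ x, |f x - Ef| ≤ B := by
      intro x
      have hsub : f x - Ef = ∫ y, (f x - f y) ∂pm := by
        rw [integral_sub (integrable_const (f x)) hfint, integral_const]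
        simp [measure_univ, hEf]
      rw [hsub]
      have := norm_integral_le_of_norm_le_const (μ := pm) (f := fun y => f x - f y) (C := B)
        (ae_of_all _ fun y => by simpa using hglob x y)
      simpa [measure_univ] using this
    -- the two tail events
    have hsubset : {x | ε ≤ |f x - Ef|} ⊆ {x | ε ≤ f x - Ef} ∪ {x | ε ≤ Ef - f x} := by
      intro x hx
      simp only [Set.mem_setOf_eq] at hx
      rcases le_abs.mp hx with h | h
      · exact Or.inl h
      · exact Or.inr (by simpa [neg_sub] using h)
    set K := exp (-2 * ε ^ 2 / S) with hK
    have hexp : -t * ε + t ^ 2 * S / 8 = -2 * ε ^ 2 / S := by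
      rw [ht]
      field_simp
      ring
    -- tail 1
    have hmeas1 : Measurable fun x => f x - Ef := hf.sub_const Ef
    have hint1 : Integrable (fun x => exp (t * (f x - Ef))) pm := by
      apply mcd_int pm _ ((hmeas1.const_mul t).exp).aestronglyMeasurable (exp (|t| * B))
      intro x
      rw [abs_of_pos (exp_pos _)]
      apply Real.exp_le_exp.mpr
      calc t * (f x - Ef) ≤ |t| * |f x - Ef| := by rw [← abs_mul]; exact le_abs_self _
        _ ≤ |t| * B := mul_le_mul_of_nonneg_left (hfEf x) (abs_nonneg t)
    have hmgf1 : ProbabilityTheory.mgf (fun x => f x - Ef) pm t ≤ exp (t ^ 2 * S / 8) := by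
      have := mcd_mgf n μ inferInstance f hf c hbd t
      exact this
    have htail1 : pm {x | ε ≤ f x - Ef} ≤ ENNReal.ofReal K := by
      have h := ProbabilityTheory.measure_ge_le_exp_mul_mgf (μ := pm)
        (X := fun x => f x - Ef) (t := t) ε htpos.le hint1
      have h2 : (pm {x | ε ≤ f x - Ef}).toReal ≤ K := by
        calc (pm {x | ε ≤ f x - Ef}).toReal
            ≤ exp (-t * ε) * ProbabilityTheory.mgf (fun x => f x - Ef) pm t := h
          _ ≤ exp (-t * ε) * exp (t ^ 2 * S / 8) :=
              mul_le_mul_of_nonneg_left hmgf1 (exp_nonneg _)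
          _ = K := by rw [← Real.exp_add, hexp, hK]
      calc pm {x | ε ≤ f x - Ef} = ENNReal.ofReal (pm {x | ε ≤ f x - Ef}).toReal :=
            (ENNReal.ofReal_toReal (measure_ne_top pm _)).symm
        _ ≤ ENNReal.ofReal K := ENNReal.ofReal_le_ofReal h2
    -- tail 2 : apply to -f
    have hbd' : ∀ (i : Fin n) (x x' : Fin n → X),
        (∀ j, j ≠ i → x j = x' j) → |(fun x => -f x) x - (fun x => -f x) x'| ≤ c i := by
      intro i x x' hxx
      simp only
      rw [show -f x - -f x' = -(f x - f x') by ring, abs_neg]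
      exact hbd i x x' hxx
    have hnegint : ∫ y, -f y ∂pm = -Ef := by rw [integral_neg, hEf]
    have hmgf2 : ProbabilityTheory.mgf (fun x => Ef - f x) pm t ≤ exp (t ^ 2 * S / 8) := by
      have := mcd_mgf n μ inferInstance (fun x => -f x) hf.neg c hbd' t
      rw [hnegint] at this
      have heq : (fun x => Ef - f x) = fun x => -f x - -Ef := by funext x; ring
      unfold ProbabilityTheory.mgf
      rw [heq]
      exact this
    have hmeas2 : Measurable fun x => Ef - f x := (measurable_const.sub hf)
    have hint2 : Integrable (fun x => exp (t * (Ef - f x))) pm := by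
      apply mcd_int pm _ ((hmeas2.const_mul t).exp).aestronglyMeasurable (exp (|t| * B))
      intro x
      rw [abs_of_pos (exp_pos _)]
      apply Real.exp_le_exp.mpr
      calc t * (Ef - f x) ≤ |t| * |Ef - f x| := by rw [← abs_mul]; exact le_abs_self _
        _ ≤ |t| * B := mul_le_mul_of_nonneg_left (by rw [abs_sub_comm]; exact hfEf x) (abs_nonneg t)
    have htail2 : pm {x | ε ≤ Ef - f x} ≤ ENNReal.ofReal K := by
      have h := ProbabilityTheory.measure_ge_le_exp_mul_mgf (μ := pm)
        (X := fun x => Ef - f x) (t := t) ε htpos.le hint2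
      have h2 : (pm {x | ε ≤ Ef - f x}).toReal ≤ K := by
        calc (pm {x | ε ≤ Ef - f x}).toReal
            ≤ exp (-t * ε) * ProbabilityTheory.mgf (fun x => Ef - f x) pm t := h
          _ ≤ exp (-t * ε) * exp (t ^ 2 * S / 8) :=
              mul_le_mul_of_nonneg_left hmgf2 (exp_nonneg _)
          _ = K := by rw [← Real.exp_add, hexp, hK]
      calc pm {x | ε ≤ Ef - f x} = ENNReal.ofReal (pm {x | ε ≤ Ef - f x}).toReal :=
            (ENNReal.ofReal_toReal (measure_ne_top pm _)).symm
        _ ≤ ENNReal.ofReal K := ENNReal.ofReal_le_ofReal h2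
    calc pm {x | ε ≤ |f x - Ef|}
        ≤ pm ({x | ε ≤ f x - Ef} ∪ {x | ε ≤ Ef - f x}) := measure_mono hsubset
      _ ≤ pm {x | ε ≤ f x - Ef} + pm {x | ε ≤ Ef - f x} := measure_union_le _ _
      _ ≤ ENNReal.ofReal K + ENNReal.ofReal K := add_le_add htail1 htail2
      _ = ENNReal.ofReal (2 * K) := by
          rw [← ENNReal.ofReal_add (exp_nonneg _) (exp_nonneg _), two_mul]
      _ = ENNReal.ofReal (2 * Real.exp (-2 * ε ^ 2 / S)) := by rw [hK]
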